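/- The elements A and y^{±1} together generate U_q(𝔰𝔩₂) as an 𝔽-algebra. -/

import Mathlib

namespace Paper


/-- Generators for the equitable presentation of `U_q(sl2)`: `x`, `y`, `y⁻¹`, `z`. -/
inductive EqGen : Type
  | x | y | y' | z

/-- The defining relations of the equitable presentation of `U_q(sl2)`. -/
inductive EqRel (F : Type*) [Field F] (q : F) :
    FreeAlgebra F EqGen → FreeAlgebra F EqGen → Prop
  | yy' : EqRel F q (FreeAlgebra.ι F EqGen.y * FreeAlgebra.ι F EqGen.y') 1
  | y'y : EqRel F q (FreeAlgebra.ι F EqGen.y' * FreeAlgebra.ι F EqGen.y) 1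
  | xy : EqRel F q
      (q • (FreeAlgebra.ι F EqGen.x * FreeAlgebra.ι F EqGen.y)
        - q⁻¹ • (FreeAlgebra.ι F EqGen.y * FreeAlgebra.ι F EqGen.x))
      ((q - q⁻¹) • (1 : FreeAlgebra F EqGen))
  | yz : EqRel F q
      (q • (FreeAlgebra.ι F EqGen.y * FreeAlgebra.ι F EqGen.z)
        - q⁻¹ • (FreeAlgebra.ι F EqGen.z * FreeAlgebra.ι F EqGen.y))
      ((q - q⁻¹) • (1 : FreeAlgebra F EqGen))
  | zx : EqRel F q
      (q • (FreeAlgebra.ι F EqGen.z * FreeAlgebra.ι F EqGen.x)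
        - q⁻¹ • (FreeAlgebra.ι F EqGen.x * FreeAlgebra.ι F EqGen.z))
      ((q - q⁻¹) • (1 : FreeAlgebra F EqGen))

/-- `U_q(sl2)` in its equitable presentation. -/
abbrev Usl2 (F : Type*) [Field F] (q : F) := RingQuot (EqRel F q)

noncomputable def ux (F : Type*) [Field F] (q : F) : Usl2 F q :=
  RingQuot.mkAlgHom F (EqRel F q) (FreeAlgebra.ι F EqGen.x)

noncomputable def uy (F : Type*) [Field F] (q : F) : Usl2 F q :=
  RingQuot.mkAlgHom F (EqRel F q) (FreeAlgebra.ι F EqGen.y)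

noncomputable def uy' (F : Type*) [Field F] (q : F) : Usl2 F q :=
  RingQuot.mkAlgHom F (EqRel F q) (FreeAlgebra.ι F EqGen.y')

noncomputable def uz (F : Type*) [Field F] (q : F) : Usl2 F q :=
  RingQuot.mkAlgHom F (EqRel F q) (FreeAlgebra.ι F EqGen.z)

/-- `X = a⁻²x + (1 − a⁻²)y⁻¹`. -/
noncomputable def uX (F : Type*) [Field F] (q a : F) : Usl2 F q :=
  (a ^ 2)⁻¹ • ux F q + (1 - (a ^ 2)⁻¹) • uy' F q

/-- `Z = a²z + (1 − a²)y⁻¹`. -/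
noncomputable def uZ (F : Type*) [Field F] (q a : F) : Usl2 F q :=
  a ^ 2 • uz F q + (1 - a ^ 2) • uy' F q

/-- `A = a⁻¹x + az`. -/
noncomputable def uA (F : Type*) [Field F] (q a : F) : Usl2 F q :=
  a⁻¹ • ux F q + a • uz F q

/-- `U_q^∨`, the subalgebra of `U_q(sl2)` generated by `x`, `y⁻¹`, `z`. -/
noncomputable def Uvee (F : Type*) [Field F] (q : F) : Subalgebra F (Usl2 F q) :=
  Algebra.adjoin F {ux F q, uy' F q, uz F q}


section Aux

variable (F : Type*) [Field F] (q : F)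

lemma urel {u v : FreeAlgebra F EqGen} (h : EqRel F q u v) :
    RingQuot.mkAlgHom F (EqRel F q) u = RingQuot.mkAlgHom F (EqRel F q) v :=
  RingQuot.mkAlgHom_rel F h

lemma uyy' : uy F q * uy' F q = 1 := by
  have := urel F q EqRel.yy'
  simpa [uy, uy', map_mul] using this

lemma uy'y : uy' F q * uy F q = 1 := by
  have := urel F q EqRel.y'y
  simpa [uy, uy', map_mul] using this

lemma uxy_rel : q • (ux F q * uy F q) - q⁻¹ • (uy F q * ux F q)
    = (q - q⁻¹) • (1 : Usl2 F q) := by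
  have := urel F q EqRel.xy
  simpa [ux, uy, map_mul, map_sub, map_smul, map_one] using this

lemma uyz_rel : q • (uy F q * uz F q) - q⁻¹ • (uz F q * uy F q)
    = (q - q⁻¹) • (1 : Usl2 F q) := by
  have := urel F q EqRel.yz
  simpa [uy, uz, map_mul, map_sub, map_smul, map_one] using this

variable (hq0 : q ≠ 0)
include hq0

/-- `x y = q⁻² (y x) + (1 - q⁻²) 1`. -/
lemma uxy_eq : ux F q * uy F q
    = (q⁻¹ * q⁻¹) • (uy F q * ux F q) + (q⁻¹ * (q - q⁻¹)) • (1 : Usl2 F q) := by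
  have h := uxy_rel F q
  have h2 : q • (ux F q * uy F q)
      = q⁻¹ • (uy F q * ux F q) + (q - q⁻¹) • (1 : Usl2 F q) := by
    rw [← h]; abel
  calc ux F q * uy F q = q⁻¹ • (q • (ux F q * uy F q)) := by
        rw [smul_smul, inv_mul_cancel₀ hq0, one_smul]
    _ = _ := by
        rw [h2, smul_add, smul_smul, smul_smul]

/-- `z y = q² (y z) - q (q - q⁻¹) 1`. -/
lemma uzy_eq : uz F q * uy F q
    = (q * q) • (uy F q * uz F q) - (q * (q - q⁻¹)) • (1 : Usl2 F q) := by
  have h := uyz_rel F q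
  have h2 : q⁻¹ • (uz F q * uy F q)
      = q • (uy F q * uz F q) - (q - q⁻¹) • (1 : Usl2 F q) := by
    rw [← h]; abel
  calc uz F q * uy F q = q • (q⁻¹ • (uz F q * uy F q)) := by
        rw [smul_smul, mul_inv_cancel₀ hq0, one_smul]
    _ = _ := by
        rw [h2, smul_sub, smul_smul, smul_smul]

lemma key_x : uy' F q * ux F q * uy F q
    = (q⁻¹ * q⁻¹) • ux F q + (q⁻¹ * (q - q⁻¹)) • uy' F q := by
  rw [mul_assoc, uxy_eq F q hq0, mul_add, mul_smul_comm, mul_smul_comm,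
    ← mul_assoc, uy'y, one_mul, mul_one]

lemma key_z : uy' F q * uz F q * uy F q
    = (q * q) • uz F q - (q * (q - q⁻¹)) • uy' F q := by
  rw [mul_assoc, uzy_eq F q hq0, mul_sub, mul_smul_comm, mul_smul_comm,
    ← mul_assoc, uy'y, one_mul, mul_one]

lemma key_A (a : F) : uy' F q * uA F q a * uy F q
    = (a⁻¹ * (q⁻¹ * q⁻¹)) • ux F q + (a * (q * q)) • uz F q
      + (a⁻¹ * (q⁻¹ * (q - q⁻¹)) - a * (q * (q - q⁻¹))) • uy' F q := by
  have hx := key_x F q hq0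
  have hz := key_z F q hq0
  rw [uA, mul_add, add_mul, mul_smul_comm, mul_smul_comm, smul_mul_assoc,
    smul_mul_assoc, hx, hz]
  module

end Aux

/-- **Lemma 7.10.** The elements `A` and `y^{±1}` together generate `U_q(sl2)`
as an `𝔽`-algebra. -/
theorem statement11 (F : Type*) [Field F] (q : F) (hq0 : q ≠ 0) (hq4 : q ^ 4 ≠ 1)
    (a : F) (ha0 : a ≠ 0) (ha2 : a ^ 2 ≠ 1) :
    Algebra.adjoin F {uA F q a, uy F q, uy' F q} = ⊤ := by
  set S := Algebra.adjoin F {uA F q a, uy F q, uy' F q} with hS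
  have hA : uA F q a ∈ S := Algebra.subset_adjoin (by simp)
  have hy : uy F q ∈ S := Algebra.subset_adjoin (by simp)
  have hy' : uy' F q ∈ S := Algebra.subset_adjoin (by simp)
  -- the element E = y' A y - β y' - arbitrary scalar multiples of A are in S
  set β : F := a⁻¹ * (q⁻¹ * (q - q⁻¹)) - a * (q * (q - q⁻¹)) with hβ
  have hE : uy' F q * uA F q a * uy F q - β • uy' F q ∈ S :=
    sub_mem (mul_mem (mul_mem hy' hA) hy) (SMulMemClass.smul_mem _ hy')
  have hEval : uy' F q * uA F q a * uy F q - β • uy' F q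
      = (a⁻¹ * (q⁻¹ * q⁻¹)) • ux F q + (a * (q * q)) • uz F q := by
    rw [key_A F q hq0 a]; abel
  -- nonvanishing scalars
  have hq2 : q⁻¹ * q⁻¹ - q * q ≠ 0 := by
    have : q⁻¹ * q⁻¹ - q * q = (1 - q ^ 4) / q ^ 2 := by
      field_simp
    rw [this]
    exact div_ne_zero (sub_ne_zero.mpr fun h => hq4 h.symm) (pow_ne_zero _ hq0)
  have hq2' : q * q - q⁻¹ * q⁻¹ ≠ 0 := fun h => hq2 (by linear_combination -h)
  -- x ∈ S
  have hxval : (uy' F q * uA F q a * uy F q - β • uy' F q) - (q * q) • uA F q a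
      = (a⁻¹ * (q⁻¹ * q⁻¹ - q * q)) • ux F q := by
    rw [hEval, uA]
    module
  have hx : ux F q ∈ S := by
    have hmem : (uy' F q * uA F q a * uy F q - β • uy' F q) - (q * q) • uA F q a ∈ S :=
      sub_mem hE (SMulMemClass.smul_mem _ hA)
    rw [hxval] at hmem
    have := SMulMemClass.smul_mem ((a⁻¹ * (q⁻¹ * q⁻¹ - q * q))⁻¹ : F) hmem
    rwa [smul_smul, inv_mul_cancel₀ (mul_ne_zero (inv_ne_zero ha0) hq2), one_smul] at this
  -- z ∈ S
  have hzval : (uy' F q * uA F q a * uy F q - β • uy' F q) - (q⁻¹ * q⁻¹) • uA F q a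
      = (a * (q * q - q⁻¹ * q⁻¹)) • uz F q := by
    rw [hEval, uA]
    module
  have hz : uz F q ∈ S := by
    have hmem : (uy' F q * uA F q a * uy F q - β • uy' F q) - (q⁻¹ * q⁻¹) • uA F q a ∈ S :=
      sub_mem hE (SMulMemClass.smul_mem _ hA)
    rw [hzval] at hmem
    have := SMulMemClass.smul_mem ((a * (q * q - q⁻¹ * q⁻¹))⁻¹ : F) hmem
    rwa [smul_smul, inv_mul_cancel₀ (mul_ne_zero ha0 hq2'), one_smul] at this
  -- generation
  rw [eq_top_iff]
  rintro u -
  obtain ⟨p, rfl⟩ := RingQuot.mkAlgHom_surjective F (EqRel F q) u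
  induction p using FreeAlgebra.induction with
  | grade0 c => rw [AlgHom.commutes]; exact algebraMap_mem S c
  | grade1 i =>
      cases i
      · exact hx
      · exact hy
      · exact hy'
      · exact hz
  | mul p₁ p₂ h₁ h₂ => rw [map_mul]; exact mul_mem h₁ h₂
  | add p₁ p₂ h₁ h₂ => rw [map_add]; exact add_mem h₁ h₂

end Paper
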